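/- arXiv:1502.07247 — 9 statements merged into one kernel-verified Lean document; each statement's English description precedes it below -/
import Mathlib

section
/- Let R ⊆ S be a ring extension and J an ideal of S with I = J ∩ R. If [R,S] is a chain under inclusion, then [R/I, S/J] is a chain under inclusion. -/
/-- If the set of intermediate rings of `R ⊆ S` is a chain under inclusion, then so is
the set of intermediate rings of `(R + J)/J ⊆ S/J` for any ideal `J` of `S`. -/
theorem stmt8 (S : Type*) [CommRing S] (R : Subring S) (J : Ideal S)
    (hchain : ∀ T₁ T₂ : Subring S, R ≤ T₁ → R ≤ T₂ → T₁ ≤ T₂ ∨ T₂ ≤ T₁) :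
    ∀ T₁' T₂' : Subring (S ⧸ J),
      Subring.map (Ideal.Quotient.mk J) R ≤ T₁' →
      Subring.map (Ideal.Quotient.mk J) R ≤ T₂' →
      T₁' ≤ T₂' ∨ T₂' ≤ T₁' := by
  intro T₁' T₂' h1 h2
  have hsurj : Function.Surjective (Ideal.Quotient.mk J) := Ideal.Quotient.mk_surjective
  have e1 : (T₁'.comap (Ideal.Quotient.mk J)).map (Ideal.Quotient.mk J) = T₁' :=
    Subring.map_comap_eq_self_of_surjective hsurj T₁'
  have e2 : (T₂'.comap (Ideal.Quotient.mk J)).map (Ideal.Quotient.mk J) = T₂' :=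
    Subring.map_comap_eq_self_of_surjective hsurj T₂'
  have hR1 : R ≤ T₁'.comap (Ideal.Quotient.mk J) := fun x hx => h1 ⟨x, hx, rfl⟩
  have hR2 : R ≤ T₂'.comap (Ideal.Quotient.mk J) := fun x hx => h2 ⟨x, hx, rfl⟩
  rcases hchain _ _ hR1 hR2 with h | h
  · exact Or.inl (e1 ▸ e2 ▸ (Subring.gc_map_comap _).monotone_l h)
  · exact Or.inr (e2 ▸ e1 ▸ (Subring.gc_map_comap _).monotone_l h)
end

section
/- Let R ⊆ S be a ring extension such that [R,S] is a chain, and let R̄ denote the integral closure of R in S. For every invertible element x of S, either x ∈ R̄ or x⁻¹ ∈ R̄. -/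
open Polynomial Algebra

theorem aux_natDegree_reflect_le {R : Type*} [Semiring R] (p : R[X]) {N : ℕ}
    (h : p.natDegree ≤ N) : (p.reflect N).natDegree ≤ N := by
  apply Polynomial.natDegree_le_iff_coeff_eq_zero.mpr
  intro i hi
  rw [Polynomial.coeff_reflect, Polynomial.revAt_eq_self_of_lt hi]
  exact Polynomial.coeff_eq_zero_of_natDegree_lt (lt_of_le_of_lt h hi)

theorem aux_integral_of_mem_adjoin_inv {R S : Type*} [CommRing R] [CommRing S] [Algebra R S]
    (u : Sˣ) (h : (u : S) ∈ Algebra.adjoin R {((u⁻¹ : Sˣ) : S)}) :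
    IsIntegral R (u : S) := by
  rw [Algebra.adjoin_singleton_eq_range_aeval] at h
  obtain ⟨p, hp⟩ := h
  set n := p.natDegree with hn
  letI : Invertible ((u⁻¹ : Sˣ) : S) := (u⁻¹).invertible
  have hinv : (⅟((u⁻¹ : Sˣ) : S)) = (u : S) := by
    exact invOf_eq_right_inv (by simp)
  have key : Polynomial.eval₂ (algebraMap R S) (⅟((u⁻¹ : Sˣ) : S)) (p.reflect n)
      * ((u⁻¹ : Sˣ) : S) ^ n = Polynomial.eval₂ (algebraMap R S) ((u⁻¹ : Sˣ) : S) p :=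
    Polynomial.eval₂_reflect_mul_pow (algebraMap R S) _ n p le_rfl
  rw [hinv] at key
  have hpu : Polynomial.eval₂ (algebraMap R S) ((u⁻¹ : Sˣ) : S) p = (u : S) := hp
  have key2 : Polynomial.aeval (u : S) (p.reflect n) = (u : S) ^ (n + 1) := by
    have := congrArg (· * (u : S) ^ n) key
    simp only [mul_assoc] at this
    rw [← mul_pow] at this
    simp only [Units.inv_mul, one_pow, mul_one] at this
    rw [hpu] at this
    rw [Polynomial.aeval_def, this, pow_succ, mul_comm]
  refine ⟨Polynomial.X ^ (n + 1) - p.reflect n, ?_, ?_⟩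
  · apply Polynomial.monic_X_pow_sub
    calc (p.reflect n).degree ≤ (n : WithBot ℕ) :=
          Polynomial.degree_le_of_natDegree_le (aux_natDegree_reflect_le p le_rfl)
      _ < ((n + 1 : ℕ) : WithBot ℕ) := by exact_mod_cast Nat.lt_succ_self n
  · have h0 : (Polynomial.aeval (u : S)) (Polynomial.X ^ (n + 1) - p.reflect n) = 0 := by
      rw [map_sub, map_pow, Polynomial.aeval_X, key2, sub_self]
    simpa [Polynomial.aeval_def] using h0

/-- If the intermediate `R`-subalgebras of `S` form a chain, then for every invertible
element `x` of `S`, either `x` or `x⁻¹` lies in the integral closure of `R` in `S`. -/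
theorem stmt9 (R S : Type*) [CommRing R] [CommRing S] [Algebra R S]
    (hchain : ∀ B C : Subalgebra R S, B ≤ C ∨ C ≤ B) (x : Sˣ) :
    (x : S) ∈ integralClosure R S ∨ ((x⁻¹ : Sˣ) : S) ∈ integralClosure R S := by
  rcases hchain (Algebra.adjoin R {(x : S)}) (Algebra.adjoin R {((x⁻¹ : Sˣ) : S)}) with h | h
  · left
    exact aux_integral_of_mem_adjoin_inv x (h (Algebra.subset_adjoin rfl))
  · right
    have := aux_integral_of_mem_adjoin_inv x⁻¹ (by
      rw [inv_inv]; exact h (Algebra.subset_adjoin rfl))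
    exact this
end

section
/- Let R̄ be an integrally closed subring of S and x a unit of S. Then every element of R̄[x] ∩ R̄[x⁻¹] is integral over R̄; consequently if R̄ is integrally closed in S then R̄[x] ∩ R̄[x⁻¹] = R̄. -/
set_option synthInstance.maxHeartbeats 1000000
set_option maxHeartbeats 1000000

/-- Determinant trick: if `y` stabilizes a f.g. `A`-submodule of `S` containing `1`,
then `y` is integral over `A`. -/
theorem aux_integral {S : Type*} [CommRing S] (A : Subring S) (N : Submodule A S)
    (hN1 : (1 : S) ∈ N) (hN' : N.FG) (y : S) (hy : ∀ n ∈ N, y * n ∈ N) :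
    IsIntegral A y := by
  haveI : Module.Finite A N := ⟨(Submodule.fg_top N).mpr hN'⟩
  let φ : Module.End A N :=
    { toFun := fun n => ⟨y * n.1, hy _ n.2⟩
      map_add' := fun m n => by ext; simp [mul_add]
      map_smul' := fun r n => by ext; simp [Subring.smul_def]; ring }
  have hφ : ∀ n : N, ((φ n : N) : S) = y * (n : S) := fun n => rfl
  have hpow : ∀ (i : ℕ) (n : N), (((φ ^ i) n : N) : S) = y ^ i * (n : S) := by
    intro i
    induction i with
    | zero => intro n; simp
    | succ i ih =>
      intro n
      have h1 : (φ ^ (i + 1)) n = (φ ^ i) (φ n) := by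
        rw [pow_succ]; rfl
      rw [h1, ih, hφ, pow_succ']
      ring
  obtain ⟨p, hmonic, hp⟩ := LinearMap.exists_monic_and_aeval_eq_zero A φ
  refine ⟨p, hmonic, ?_⟩
  have h0 := congrArg (fun g : Module.End A N => ((g ⟨1, hN1⟩ : N) : S)) hp
  simp only [LinearMap.zero_apply, ZeroMemClass.coe_zero] at h0
  have h1 : (((Polynomial.aeval φ p) ⟨1, hN1⟩ : N) : S) = Polynomial.aeval y p := by
    rw [Polynomial.aeval_eq_sum_range (x := φ), Polynomial.aeval_eq_sum_range (x := y),
      LinearMap.sum_apply]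
    rw [AddSubmonoidClass.coe_finset_sum]
    refine Finset.sum_congr rfl fun i _ => ?_
    rw [LinearMap.smul_apply, SetLike.val_smul, hpow, mul_one]
  have h2 : Polynomial.aeval y p = 0 := by rw [← h1, h0]
  rw [← Polynomial.aeval_def]
  exact h2

/-- Let `A` be a subring of `S` and `x` a unit of `S`. Every element of
`A[x] ∩ A[x⁻¹]` is integral over `A`; consequently, if `A` is integrally closed in `S`
then `A[x] ∩ A[x⁻¹] = A`. -/
theorem stmt10 (S : Type*) [CommRing S] (A : Subring S) (x : Sˣ) :
    (∀ y : S,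
        y ∈ Subring.closure (↑A ∪ {(x : S)}) ⊓ Subring.closure (↑A ∪ {((x⁻¹ : Sˣ) : S)}) →
          IsIntegral A y) ∧
      ((∀ y : S, IsIntegral A y → y ∈ A) →
        Subring.closure (↑A ∪ {(x : S)}) ⊓ Subring.closure (↑A ∪ {((x⁻¹ : Sˣ) : S)}) = A) := by
  have hrange : Set.range (algebraMap A S) = (A : Set S) := by
    ext z
    exact ⟨fun ⟨a, ha⟩ => ha ▸ a.2, fun hz => ⟨⟨z, hz⟩, rfl⟩⟩
  have hclosure : ∀ z : S, Subring.closure (↑A ∪ {z}) = (Algebra.adjoin A {z}).toSubring := by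
    intro z
    rw [Algebra.adjoin_eq_ring_closure, hrange]
  have hmem : ∀ (z w : S), w ∈ Subring.closure (↑A ∪ {z}) →
      ∃ p : Polynomial A, Polynomial.aeval z p = w := by
    intro z w hw
    rw [hclosure z] at hw
    have : w ∈ Algebra.adjoin A {z} := hw
    rw [Algebra.adjoin_singleton_eq_range_aeval] at this
    exact this
  have main : ∀ y : S,
      y ∈ Subring.closure (↑A ∪ {(x : S)}) ⊓ Subring.closure (↑A ∪ {((x⁻¹ : Sˣ) : S)}) →
        IsIntegral A y := by
    intro y hy
    obtain ⟨hy1, hy2⟩ := hy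
    obtain ⟨p, hp⟩ := hmem _ _ hy1
    obtain ⟨q, hq⟩ := hmem _ _ hy2
    set d := p.natDegree with hd
    set e := q.natDegree with he
    set N : Submodule A S := Submodule.span A ((fun i => (x : S) ^ i) '' Set.Iic (d + e)) with hN
    have pow_mem : ∀ m, m ≤ d + e → (x : S) ^ m ∈ N := fun m hm =>
      Submodule.subset_span ⟨m, hm, rfl⟩
    have hN1 : (1 : S) ∈ N := by simpa using pow_mem 0 (Nat.zero_le _)
    have hNfg : N.FG := Submodule.fg_span ((Set.finite_Iic _).image _)
    have hinv : ∀ j k : ℕ, j ≤ k → ((x⁻¹ : Sˣ) : S) ^ j * (x : S) ^ k = (x : S) ^ (k - j) := by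
      intro j k hjk
      have h2 : (x : S) ^ k = (x : S) ^ j * (x : S) ^ (k - j) := by
        rw [← pow_add, Nat.add_sub_cancel' hjk]
      rw [h2, ← mul_assoc]
      have : ((x⁻¹ : Sˣ) : S) ^ j * (x : S) ^ j = 1 := by
        rw [← Units.val_pow_eq_pow_val, ← Units.val_pow_eq_pow_val, ← Units.val_mul,
          inv_pow, inv_mul_cancel, Units.val_one]
      rw [this, one_mul]
    have key : ∀ k, k ≤ d + e → y * (x : S) ^ k ∈ N := by
      intro k hk
      rcases le_or_gt e k with hek | hek
      · rw [← hq, Polynomial.aeval_eq_sum_range, Finset.sum_mul]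
        apply Submodule.sum_mem
        intro j hj
        have hj' : j ≤ e := Nat.lt_succ_iff.mp (Finset.mem_range.mp hj)
        rw [smul_mul_assoc, hinv j k (hj'.trans hek)]
        exact N.smul_mem _ (pow_mem _ (le_trans (Nat.sub_le _ _) hk))
      · rw [← hp, Polynomial.aeval_eq_sum_range, Finset.sum_mul]
        apply Submodule.sum_mem
        intro i hi
        have hi' : i ≤ d := Nat.lt_succ_iff.mp (Finset.mem_range.mp hi)
        rw [smul_mul_assoc, ← pow_add]
        exact N.smul_mem _ (pow_mem _ (add_le_add hi' hek.le))
    refine aux_integral A N hN1 hNfg y ?_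
    intro n hn
    have hle : N ≤ N.comap (LinearMap.mulLeft A y) := by
      rw [hN, Submodule.span_le]
      rintro _ ⟨k, hk, rfl⟩
      exact key k hk
    exact hle hn
  refine ⟨main, fun hcl => ?_⟩
  refine le_antisymm (fun y hy => hcl y (main y hy)) (le_inf ?_ ?_) <;>
    exact fun z hz => Subring.subset_closure (Or.inl hz)
end

section
/- Let R ⊂ T be a ring extension such that M := (R : T) (the conductor) is a maximal ideal of both R and T and R/M → T/M is a minimal field extension. Then R ⊂ T is a minimal ring extension (there is no ring strictly between R and T). -/
/-- A transcendental element `x` is not in the subfield generated by `x ^ 2`. -/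
lemma aux_not_mem_adjoin_sq {F E : Type*} [Field F] [Field E] [Algebra F E] {x : E}
    (hx : Transcendental F x) : x ∉ IntermediateField.adjoin F {x ^ 2} := by
  intro hmem
  rw [IntermediateField.mem_adjoin_simple_iff] at hmem
  obtain ⟨r, s, hrs⟩ := hmem
  have hs : (Polynomial.aeval (x ^ 2)) s ≠ 0 := by
    intro h
    rw [h, div_zero] at hrs
    exact hx (hrs ▸ isAlgebraic_zero)
  have hmul : x * (Polynomial.aeval (x ^ 2)) s = (Polynomial.aeval (x ^ 2)) r :=
    (eq_div_iff hs).mp hrs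
  set p : Polynomial F := Polynomial.X * Polynomial.expand F 2 s - Polynomial.expand F 2 r
    with hp
  have hev : Polynomial.aeval x p = 0 := by
    simp [hp, Polynomial.expand_aeval, hmul]
  have hp0 : p = 0 := by
    by_contra h
    exact hx ⟨p, h, hev⟩
  have hs0 : s = 0 := by
    ext k
    have h2k : p.coeff (2 * k + 1) = 0 := by rw [hp0, Polynomial.coeff_zero]
    rw [hp, Polynomial.coeff_sub, Polynomial.coeff_X_mul,
      Polynomial.coeff_expand_mul' (by norm_num : 0 < 2),
      Polynomial.coeff_expand (by norm_num : 0 < 2), if_neg (by omega)] at h2k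
    simpa using h2k
  exact hs (by simp [hs0])

/-- If a subfield `K` of a field `E` has no proper intermediate subfields, then every
element of `E` is integral over `K`. -/
lemma aux_isIntegral {E : Type*} [Field E] (K : Subfield E)
    (hmin : ∀ F : Subfield E, K ≤ F → F = K ∨ F = ⊤) (x : E) : IsIntegral (↥K) x := by
  rw [← isAlgebraic_iff_isIntegral]
  by_contra hx
  have hx2 : Transcendental (↥K) (x ^ 2) :=
    Transcendental.pow (hx : Transcendental (↥K) x) two_pos
  have hKE : K ≤ (IntermediateField.adjoin (↥K) {x ^ 2}).toSubfield := by
    intro k hk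
    exact (IntermediateField.adjoin (↥K) {x ^ 2}).algebraMap_mem ⟨k, hk⟩
  rcases hmin _ hKE with h | h
  · have hm : x ^ 2 ∈ K := by
      have := IntermediateField.mem_adjoin_simple_self (↥K) (x ^ 2)
      rw [← IntermediateField.mem_toSubfield, h] at this
      exact this
    exact hx2 (isAlgebraic_algebraMap (⟨x ^ 2, hm⟩ : K))
  · have hm : x ∈ IntermediateField.adjoin (↥K) {x ^ 2} := by
      rw [← IntermediateField.mem_toSubfield, h]; trivial
    exact aux_not_mem_adjoin_sq hx hm

/-- If the conductor `M = (R : T)` of a ring extension `R ⊂ T` is a maximal ideal of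
both `R` and `T`, and the induced residue extension `R/M → T/M` is a minimal field
extension, then `R ⊂ T` is a minimal ring extension. -/
theorem stmt11 (T : Type*) [CommRing T] (R : Subring T) (M : Ideal T)
    (hcond : ∀ t : T, t ∈ M ↔ ∀ u : T, t * u ∈ R)
    (hTmax : M.IsMaximal) (hRmax : (M.comap R.subtype).IsMaximal)
    (hne : R ≠ ⊤)
    (hnotsurj :
      ¬ Function.Surjective
        (Ideal.quotientMap (I := M.comap R.subtype) M R.subtype le_rfl))
    (hmin :
      letI : Field (T ⧸ M) := @Ideal.Quotient.field T _ M hTmax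
      letI : Field (↥R ⧸ M.comap R.subtype) :=
        @Ideal.Quotient.field ↥R _ (M.comap R.subtype) hRmax
      ∀ F : Subfield (T ⧸ M),
        (Ideal.quotientMap (I := M.comap R.subtype) M R.subtype le_rfl).fieldRange ≤ F →
          F = (Ideal.quotientMap (I := M.comap R.subtype) M R.subtype le_rfl).fieldRange ∨
            F = ⊤) :
    ∀ U : Subring T, R ≤ U → U = R ∨ U = ⊤ := by
  intro U hRU
  haveI := hTmax
  haveI := hRmax
  have hMR : ∀ t : T, t ∈ M → t ∈ R := fun t ht => by
    simpa using (hcond t).1 ht 1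
  letI : Field (T ⧸ M) := Ideal.Quotient.field M
  letI : Field (↥R ⧸ M.comap R.subtype) := Ideal.Quotient.field _
  set φ : (↥R ⧸ M.comap R.subtype) →+* (T ⧸ M) :=
    Ideal.quotientMap (I := M.comap R.subtype) M R.subtype le_rfl with hφ
  set S : Subring (T ⧸ M) := U.map (Ideal.Quotient.mk M) with hS
  have hKS : ∀ {y : T ⧸ M}, y ∈ φ.fieldRange → y ∈ S := by
    rintro y hy
    obtain ⟨z, rfl⟩ := RingHom.mem_fieldRange.mp hy
    obtain ⟨r, rfl⟩ := Ideal.Quotient.mk_surjective z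
    rw [hφ, Ideal.quotientMap_mk]
    exact ⟨(r : T), hRU r.2, rfl⟩
  have halg : ∀ x : T ⧸ M, IsIntegral (↥φ.fieldRange) x :=
    aux_isIntegral φ.fieldRange hmin
  set S' : Subalgebra (↥φ.fieldRange) (T ⧸ M) :=
    { S.toSubsemiring with algebraMap_mem' := fun k => hKS k.2 } with hS'
  set F : Subfield (T ⧸ M) :=
    { S with inv_mem' := fun x hx => (halg x).inv_mem (A := S') hx } with hF
  have hKF : φ.fieldRange ≤ F := fun y hy => hKS hy
  rcases hmin F hKF with h | h
  · left
    refine le_antisymm (fun u hu => ?_) hRU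
    have hmemF : Ideal.Quotient.mk M u ∈ F := ⟨u, hu, rfl⟩
    rw [h] at hmemF
    obtain ⟨z, hz⟩ := RingHom.mem_fieldRange.mp hmemF
    obtain ⟨r, rfl⟩ := Ideal.Quotient.mk_surjective z
    rw [hφ, Ideal.quotientMap_mk] at hz
    have hmem : (r : T) - u ∈ M := Ideal.Quotient.eq.mp hz
    have := R.sub_mem r.2 (hMR _ hmem)
    simpa using this
  · right
    rw [eq_top_iff]
    intro t _
    have hmemF : Ideal.Quotient.mk M t ∈ F := by rw [h]; trivial
    obtain ⟨u, hu, huv⟩ := hmemF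
    have hmem : u - t ∈ M := Ideal.Quotient.eq.mp huv
    have := U.sub_mem hu (hRU (hMR _ hmem))
    simpa using this
end

section
/- Let R ⊂ S be a ring extension and suppose M := (R:S) is a maximal ideal of R with M ∈ Max(S), and there exists M' ∈ Max(S) with M'² ⊆ M ⊂ M', [S/M : R/M] = 2, and R/M → S/M' an isomorphism (a ramified minimal extension). Then R ⊂ S is subintegral: the spectral map Spec(S) → Spec(R) is bijective and all residual field extensions are isomorphisms. -/
/-- A ramified minimal extension is subintegral: if the conductor `M = (R:S)` is a
maximal ideal of `R` and there is `M' ∈ Max(S)` with `M'² ⊆ M ⊂ M'`,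
`[S/M : R/M] = 2` and `R/M → S/M'` an isomorphism, then the spectral map
`Spec S → Spec R` is bijective and all residual field extensions are isomorphisms. -/
theorem stmt12 (S : Type*) [CommRing S] (R : Subring S) (M : Ideal S)
    (hcond : ∀ t : S, t ∈ M ↔ ∀ u : S, t * u ∈ R)
    (hRmax : (M.comap R.subtype).IsMaximal)
    (M' : Ideal S) (hM' : M'.IsMaximal)
    (hsq : M' * M' ≤ M) (hlt : M < M')
    (hdim : ∃ b : S, (¬ ∃ r ∈ R, b - r ∈ M) ∧
      ∀ s : S, ∃ r₁ ∈ R, ∃ r₂ ∈ R, s - (r₁ + r₂ * b) ∈ M)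
    (hiso : Function.Bijective
      (Ideal.quotientMap (I := M.comap R.subtype) M' R.subtype
        (Ideal.comap_mono hlt.le))) :
    Function.Bijective (fun Q : PrimeSpectrum S => (PrimeSpectrum.comap R.subtype) Q) ∧
      ∀ (Q : Ideal S) [Q.IsPrime],
        Function.Bijective
          (IsLocalRing.ResidueField.map
            (Localization.localRingHom (Q.comap R.subtype) Q R.subtype rfl)) := by
  classical
  have hMR : ∀ t ∈ M, t ∈ R := fun t ht => by simpa using (hcond t).1 ht 1
  have hmul : ∀ t ∈ M, ∀ s : S, t * s ∈ R := fun t ht s => (hcond t).1 ht s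
  -- integrality of S over R
  obtain ⟨b, -, hb⟩ := hdim
  have hspan : Submodule.span R ({1, b} : Set S) = ⊤ := by
    rw [eq_top_iff]
    rintro s -
    obtain ⟨r₁, hr₁, r₂, hr₂, hm⟩ := hb s
    rw [Submodule.mem_span_pair]
    refine ⟨⟨r₁ + (s - (r₁ + r₂ * b)), add_mem hr₁ (hMR _ hm)⟩, ⟨r₂, hr₂⟩, ?_⟩
    show (r₁ + (s - (r₁ + r₂ * b))) * 1 + r₂ * b = s
    ring
  haveI : Module.Finite R S := ⟨⟨{1, b}, by simpa using hspan⟩⟩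
  haveI : Algebra.IsIntegral R S := Algebra.IsIntegral.of_finite R S
  -- every prime containing M equals M'
  have hMQ_eq : ∀ (Q : Ideal S), Q.IsPrime → M ≤ Q → Q = M' := by
    intro Q hQ hMQ
    have h1 : M' ≤ Q := ((Ideal.IsPrime.mul_le hQ).mp (le_trans hsq hMQ)).elim id id
    exact (hM'.eq_of_le hQ.ne_top h1).symm
  -- injectivity of the spectral map
  have hinj : Function.Injective
      (fun Q : PrimeSpectrum S => (PrimeSpectrum.comap R.subtype) Q) := by
    intro Q₁ Q₂ h
    have h' : Q₁.asIdeal.comap R.subtype = Q₂.asIdeal.comap R.subtype :=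
      congrArg PrimeSpectrum.asIdeal h
    have key : ∀ x ∈ R, (x ∈ Q₁.asIdeal ↔ x ∈ Q₂.asIdeal) := by
      intro x hx
      constructor
      · intro hx1
        have : (⟨x, hx⟩ : R) ∈ Q₁.asIdeal.comap R.subtype := hx1
        rw [h'] at this
        exact this
      · intro hx2
        have : (⟨x, hx⟩ : R) ∈ Q₂.asIdeal.comap R.subtype := hx2
        rw [← h'] at this
        exact this
    ext1
    by_cases hM1 : M ≤ Q₁.asIdeal
    · have hM2 : M ≤ Q₂.asIdeal := fun m hm => (key m (hMR m hm)).mp (hM1 hm)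
      rw [hMQ_eq _ Q₁.isPrime hM1, hMQ_eq _ Q₂.isPrime hM2]
    · obtain ⟨t, htM, htQ1⟩ := SetLike.not_le_iff_exists.mp hM1
      have htQ2 : t ∉ Q₂.asIdeal := fun h'' => htQ1 ((key t (hMR t htM)).mpr h'')
      ext s
      constructor
      · intro hs
        have h1 : t * s ∈ Q₁.asIdeal := Q₁.asIdeal.mul_mem_left t hs
        have h2 : t * s ∈ Q₂.asIdeal := (key _ (hmul t htM s)).mp h1
        exact (Q₂.isPrime.mem_or_mem h2).resolve_left htQ2
      · intro hs
        have h1 : t * s ∈ Q₂.asIdeal := Q₂.asIdeal.mul_mem_left t hs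
        have h2 : t * s ∈ Q₁.asIdeal := (key _ (hmul t htM s)).mpr h1
        exact (Q₁.isPrime.mem_or_mem h2).resolve_left htQ1
  -- surjectivity of the spectral map
  have hsurj : Function.Surjective
      (fun Q : PrimeSpectrum S => (PrimeSpectrum.comap R.subtype) Q) := by
    intro p
    haveI := p.isPrime
    obtain ⟨Q, -, hQp, hQcomap⟩ :=
      Ideal.exists_ideal_over_prime_of_isIntegral p.asIdeal (⊥ : Ideal S)
        (by
          intro x hx
          have hx0 : algebraMap R S x = 0 := by simpa using hx
          have hx1 : x = 0 := Subtype.ext hx0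
          simp [hx1])
    exact ⟨⟨Q, hQp⟩, PrimeSpectrum.ext hQcomap⟩
  -- surjectivity of R onto S/M'
  have hRM' : ∀ s : S, ∃ r ∈ R, s - r ∈ M' := by
    intro s
    obtain ⟨x, hx⟩ := hiso.2 (Ideal.Quotient.mk M' s)
    obtain ⟨r, rfl⟩ := Ideal.Quotient.mk_surjective x
    refine ⟨r, r.2, ?_⟩
    rw [Ideal.quotientMap_mk] at hx
    have : Ideal.Quotient.mk M' s = Ideal.Quotient.mk M' (r : S) := hx.symm
    exact Ideal.Quotient.eq.mp this
  -- residue field part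
  have hres : ∀ (Q : Ideal S) (_ : Q.IsPrime),
      Function.Bijective
        (IsLocalRing.ResidueField.map
          (Localization.localRingHom (Q.comap R.subtype) Q R.subtype rfl)) := by
    intro Q hQ
    set P := Q.comap R.subtype with hP
    set f := Localization.localRingHom P Q R.subtype rfl with hf
    set g := (IsLocalRing.residue (Localization.AtPrime Q)).comp f with hg
    set resQ := (IsLocalRing.residue (Localization.AtPrime Q)).comp
      (algebraMap S (Localization.AtPrime Q)) with hresQ
    -- resQ kills exactly Q
    have hresQ_zero : ∀ s : S, resQ s = 0 ↔ s ∈ Q := fun s =>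
      (Ideal.Quotient.eq_zero_iff_mem).trans
        (IsLocalization.AtPrime.to_map_mem_maximal_iff _ Q s)
    -- range of g is closed under inverses
    have hinvg : ∀ y ∈ g.range, y⁻¹ ∈ g.range := by
      intro y hy
      obtain ⟨x, rfl⟩ := hy
      by_cases h0 : g x = 0
      · rw [h0, inv_zero]
        exact ⟨0, by simp⟩
      · have hfx : IsUnit (f x) := by
          by_contra hfx
          apply h0
          exact Ideal.Quotient.eq_zero_iff_mem.mpr ((IsLocalRing.mem_maximalIdeal _).mpr hfx)
        have hx : IsUnit x := IsLocalHom.map_nonunit x hfx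
        obtain ⟨u, rfl⟩ := hx
        refine ⟨(↑u⁻¹ : Localization.AtPrime P), ?_⟩
        have h1 : g ↑u * g ↑u⁻¹ = 1 := by
          rw [← map_mul]
          simp
        exact (inv_eq_of_mul_eq_one_right h1).symm
    -- images of elements of R
    have hRrange : ∀ (r : S) (hr : r ∈ R), resQ r ∈ g.range := by
      intro r hr
      refine ⟨algebraMap R (Localization.AtPrime P) ⟨r, hr⟩, ?_⟩
      rw [hg]
      simp only [RingHom.comp_apply]
      rw [hf, Localization.localRingHom_to_map]
      rfl
    -- images of all elements of S
    have hSrange : ∀ s : S, resQ s ∈ g.range := by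
      by_cases hMQ : M ≤ Q
      · have hQM' : Q = M' := hMQ_eq Q hQ hMQ
        intro s
        obtain ⟨r, hr, hsr⟩ := hRM' s
        have h0 : resQ (s - r) = 0 := (hresQ_zero _).mpr (hQM' ▸ hsr)
        have h1 : resQ s - resQ r = 0 := by rw [← map_sub]; exact h0
        have heq : resQ s = resQ r := sub_eq_zero.mp h1
        rw [heq]
        exact hRrange r hr
      · obtain ⟨t, htM, htQ⟩ := SetLike.not_le_iff_exists.mp hMQ
        intro s
        have ht0 : resQ t ≠ 0 := fun h => htQ ((hresQ_zero t).mp h)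
        have heq : resQ s = resQ (t * s) * (resQ t)⁻¹ := by
          rw [map_mul, mul_comm (resQ t), mul_assoc, mul_inv_cancel₀ ht0, mul_one]
        rw [heq]
        exact Subring.mul_mem _ (hRrange _ (hmul t htM s)) (hinvg _ (hRrange t (hMR t htM)))
    -- g is surjective
    have hgsurj : ∀ y : IsLocalRing.ResidueField (Localization.AtPrime Q), y ∈ g.range := by
      intro y
      obtain ⟨z, rfl⟩ := Ideal.Quotient.mk_surjective y
      obtain ⟨⟨s, u⟩, rfl⟩ := IsLocalization.mk'_surjective Q.primeCompl z
      have hu0 : resQ (u : S) ≠ 0 := fun h => u.2 ((hresQ_zero _).mp h)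
      have hspec : IsLocalization.mk' (Localization.AtPrime Q) s u *
          algebraMap S (Localization.AtPrime Q) (u : S) =
          algebraMap S (Localization.AtPrime Q) s := IsLocalization.mk'_spec _ s u
      have h1 : IsLocalRing.residue (Localization.AtPrime Q)
          (IsLocalization.mk' (Localization.AtPrime Q) s u) * resQ (u : S) = resQ s := by
        show IsLocalRing.residue (Localization.AtPrime Q)
            (IsLocalization.mk' (Localization.AtPrime Q) s u) *
          IsLocalRing.residue (Localization.AtPrime Q)
            (algebraMap S (Localization.AtPrime Q) (u : S)) = _
        rw [← map_mul, hspec]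
        rfl
      have heq : IsLocalRing.residue (Localization.AtPrime Q)
          (IsLocalization.mk' (Localization.AtPrime Q) s u) = resQ s * (resQ (u : S))⁻¹ := by
        rw [← h1, mul_assoc, mul_inv_cancel₀ hu0, mul_one]
      show IsLocalRing.residue (Localization.AtPrime Q)
          (IsLocalization.mk' (Localization.AtPrime Q) s u) ∈ g.range
      rw [heq]
      exact Subring.mul_mem _ (hSrange s) (hinvg _ (hSrange (u : S)))
    constructor
    · exact RingHom.injective _
    · intro y
      obtain ⟨x, hx⟩ := hgsurj y
      refine ⟨IsLocalRing.residue _ x, ?_⟩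
      rw [IsLocalRing.ResidueField.map_residue]
      exact hx
  exact ⟨⟨hinj, hsurj⟩, fun Q hQ => hres Q hQ⟩
end

section
/- Let (R, M) be a local Artinian ring which is not a field, with index of nilpotency n of M (M^n = 0, M^{n-1} ≠ 0), and let R ⊂ S be a finite subintegral extension with (R:S) = 0. Set M_i := M + S·M^i for 0 ≤ i ≤ n. Then M_i ≠ M_{i+1} for all 1 ≤ i ≤ n−1; in particular the length of the R-module SM/M is at least n − 1. -/
lemma stmt14_nak_aux {R M : Type*} [CommRing R] [AddCommGroup M] [Module R M]
    (I : Ideal R) (A N : Submodule R M) (hIA : I • A ≤ A)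
    (h1 : N ≤ A ⊔ I • N) {n : ℕ} (hn0 : I ^ n = ⊥) : N ≤ A := by
  have hassoc : ∀ (J K : Ideal R) (P : Submodule R M), (J * K) • P = J • K • P :=
    fun J K P => by rw [← smul_eq_mul, Submodule.smul_assoc]
  have hIkA : ∀ k : ℕ, (I ^ k) • A ≤ A := by
    intro k
    induction k with
    | zero => simp [Ideal.one_eq_top]
    | succ k ih =>
      rw [pow_succ, hassoc]
      calc (I ^ k) • I • A ≤ (I ^ k) • A := Submodule.smul_mono le_rfl hIA
        _ ≤ A := ih
  have iter : ∀ k : ℕ, N ≤ A ⊔ (I ^ k) • N := by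
    intro k
    induction k with
    | zero => simpa [Ideal.one_eq_top] using le_sup_right
    | succ k ih =>
      refine ih.trans ?_
      refine sup_le le_sup_left ?_
      calc (I ^ k) • N ≤ (I ^ k) • (A ⊔ I • N) := Submodule.smul_mono le_rfl h1
        _ = (I ^ k) • A ⊔ (I ^ k) • I • N := Submodule.smul_sup _ _ _
        _ ≤ A ⊔ (I ^ (k + 1)) • N := by
          refine sup_le_sup (hIkA k) ?_
          rw [pow_succ, hassoc]
  have := iter n
  rwa [hn0, Submodule.bot_smul, sup_bot_eq] at this

/-- Let `(R, M)` be a local Artinian ring which is not a field, with `Mⁿ = 0` and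
`Mⁿ⁻¹ ≠ 0`, and let `R ⊂ S` be a finite subintegral extension with zero conductor.
Setting `M_i := M + S·Mⁱ` (as `R`-submodules of `S`), one has `M_i ≠ M_{i+1}` for
`1 ≤ i ≤ n - 1`; in particular there is a strictly increasing chain of length `n - 1`
from `M = M_n` to `SM = M_1`, so the length of `SM/M` is at least `n - 1`. -/
theorem stmt14 (S : Type*) [CommRing S] (R : Subring S)
    [IsLocalRing ↥R] [IsArtinianRing ↥R] (hnf : ¬ IsField ↥R)
    [Module.Finite ↥R S]
    (hspec : Function.Bijective (fun Q : PrimeSpectrum S => (PrimeSpectrum.comap R.subtype) Q))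
    (hres : ∀ (Q : Ideal S) [Q.IsPrime],
      Function.Bijective
        (IsLocalRing.ResidueField.map
          (Localization.localRingHom (Q.comap R.subtype) Q R.subtype rfl)))
    (hcond : ∀ t : S, (∀ u : S, t * u ∈ R) → t = 0)
    (n : ℕ) (hn : 1 ≤ n)
    (hn0 : (IsLocalRing.maximalIdeal ↥R) ^ n = ⊥)
    (hn1 : (IsLocalRing.maximalIdeal ↥R) ^ (n - 1) ≠ ⊥)
    (Mi : ℕ → Submodule ↥R S)
    (hMi : ∀ i, Mi i =
      Submodule.map (Algebra.linearMap ↥R S)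
          (IsLocalRing.maximalIdeal ↥R : Submodule ↥R ↥R) ⊔
        Submodule.restrictScalars ↥R
          (Ideal.map (algebraMap ↥R S) ((IsLocalRing.maximalIdeal ↥R) ^ i))) :
    (∀ i, 1 ≤ i → i ≤ n - 1 → Mi i ≠ Mi (i + 1)) ∧
      ∃ c : RelSeries {(x, y) : Submodule ↥R S × Submodule ↥R S | x < y},
        c.length = n - 1 ∧ c.head = Mi n ∧ c.last = Mi 1 := by
  set I : Ideal ↥R := IsLocalRing.maximalIdeal ↥R with hI
  set A : Submodule ↥R S :=
    Submodule.map (Algebra.linearMap ↥R S) (I : Submodule ↥R ↥R) with hA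
  have hassoc : ∀ (J K : Ideal ↥R) (P : Submodule ↥R S), (J * K) • P = J • K • P :=
    fun J K P => by rw [← smul_eq_mul, Submodule.smul_assoc]
  have hB : ∀ i : ℕ, Submodule.restrictScalars ↥R
      (Ideal.map (algebraMap ↥R S) (I ^ i)) = (I ^ i) • (⊤ : Submodule ↥R S) :=
    fun i => (Ideal.smul_top_eq_map _).symm
  have hMi' : ∀ i, Mi i = A ⊔ (I ^ i) • (⊤ : Submodule ↥R S) := by
    intro i; rw [hMi i, hB]
  have hIA : I • A ≤ A := by
    rw [Submodule.smul_le]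
    rintro r hr a ha
    obtain ⟨x, hx, rfl⟩ := ha
    exact ⟨r • x, Submodule.smul_mem _ r hx,
      ((Algebra.linearMap ↥R S).map_smul r x).symm⟩
  -- main strictness
  have key : ∀ i, 1 ≤ i → i ≤ n - 1 → Mi i ≠ Mi (i + 1) := by
    intro i hi1 hi2 h
    rw [hMi' i, hMi' (i + 1)] at h
    have h1 : A ⊔ (I ^ i) • (⊤ : Submodule ↥R S) ≤
        A ⊔ I • (A ⊔ (I ^ i) • (⊤ : Submodule ↥R S)) := by
      calc A ⊔ (I ^ i) • (⊤ : Submodule ↥R S)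
          = A ⊔ I • ((I ^ i) • (⊤ : Submodule ↥R S)) := by rw [h, pow_succ', hassoc]
        _ ≤ A ⊔ I • (A ⊔ (I ^ i) • (⊤ : Submodule ↥R S)) :=
            sup_le_sup le_rfl (Submodule.smul_mono le_rfl le_sup_right)
    have hNA : (A ⊔ (I ^ i) • (⊤ : Submodule ↥R S)) ≤ A :=
      stmt14_nak_aux I A _ hIA h1 hn0
    obtain ⟨x, hx, hx0⟩ := (Submodule.ne_bot_iff _).mp hn1
    have hxI : x ∈ I ^ i := Ideal.pow_le_pow_right (by omega) hx
    have hxz : (x : S) = 0 := by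
      apply hcond
      intro u
      have hmem : x • u ∈ (I ^ i) • (⊤ : Submodule ↥R S) :=
        Submodule.smul_mem_smul hxI Submodule.mem_top
      have hmem' : x • u ∈ A := hNA (Submodule.mem_sup_right hmem)
      obtain ⟨m, hm, hm'⟩ := hmem'
      rw [Algebra.smul_def] at hm'
      have : (x : S) * u = (m : S) := hm'.symm
      rw [this]
      exact m.2
    exact hx0 (Subtype.ext hxz)
  refine ⟨key, ?_⟩
  have hle : ∀ i : ℕ, Mi (i + 1) ≤ Mi i := by
    intro i
    rw [hMi' i, hMi' (i + 1)]
    exact sup_le_sup le_rfl (Submodule.smul_mono (Ideal.pow_le_pow_right (by omega)) le_rfl)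
  refine ⟨⟨n - 1, fun j => Mi (n - j.val), ?_⟩, rfl, ?_, ?_⟩
  · intro j
    have hj : (j : ℕ) < n - 1 := j.2
    have e1 : n - (j.castSucc : ℕ) = (n - ((j : ℕ) + 1)) + 1 := by
      simp only [Fin.coe_castSucc]; omega
    have e2 : n - (j.succ : ℕ) = n - ((j : ℕ) + 1) := by
      simp only [Fin.val_succ]
    have hi1 : 1 ≤ n - ((j : ℕ) + 1) := by omega
    have hi2 : n - ((j : ℕ) + 1) ≤ n - 1 := by omega
    show Mi (n - (j.castSucc : ℕ)) < Mi (n - (j.succ : ℕ))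
    rw [e1, e2]
    exact lt_of_le_of_ne (hle _) (Ne.symm (key _ hi1 hi2))
  · show Mi (n - (0 : Fin (n - 1 + 1)).val) = Mi n
    norm_num
  · show Mi (n - (Fin.last (n - 1)).val) = Mi 1
    rw [Fin.val_last]
    congr 1
    omega
end

section
/- With the notation and hypotheses of the previous setting ((R,M) local Artinian not a field, R ⊂ S finite subintegral with (R:S)=0, n the nilpotency index of M, M_i := M + SM^i, R_i := R + SM^i), if L_R(M_i/M_{i+1}) = 1 for all i = 1,…,n−1, then each extension R_{i+1} ⊂ R_i is a ramified minimal extension, so R = R_n ⊂ R_{n-1} ⊂ ⋯ ⊂ R_1 is a maximal chain of rings. -/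
/-- With `(R, M)` local Artinian not a field, `R ⊂ S` finite subintegral with zero
conductor, `n` the nilpotency index of `M`, `M_i := M + SMⁱ` and `R_i := R + SMⁱ`:
if `L_R(M_i/M_{i+1}) = 1` (i.e. `M_{i+1} ⋖ M_i`) for all `i = 1, …, n-1`, then each
`R_{i+1} ⊂ R_i` is a ramified minimal extension (strict, with no strictly
intermediate ring, with conductor `M_{i+1}` and `M_i² ⊆ M_{i+1}`), so
`R = R_n ⊂ R_{n-1} ⊂ ⋯ ⊂ R_1` is a maximal chain of rings. -/
theorem stmt15 (S : Type*) [CommRing S] (R : Subring S)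
    [IsLocalRing ↥R] [IsArtinianRing ↥R] (hnf : ¬ IsField ↥R)
    [Module.Finite ↥R S]
    (hspec : Function.Bijective (fun Q : PrimeSpectrum S => (PrimeSpectrum.comap R.subtype) Q))
    (hres : ∀ (Q : Ideal S) [Q.IsPrime],
      Function.Bijective
        (IsLocalRing.ResidueField.map
          (Localization.localRingHom (Q.comap R.subtype) Q R.subtype rfl)))
    (hcond : ∀ t : S, (∀ u : S, t * u ∈ R) → t = 0)
    (n : ℕ) (hn : 1 ≤ n)
    (hn0 : (IsLocalRing.maximalIdeal ↥R) ^ n = ⊥)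
    (hn1 : (IsLocalRing.maximalIdeal ↥R) ^ (n - 1) ≠ ⊥)
    (Mi : ℕ → Submodule ↥R S)
    (hMi : ∀ i, Mi i =
      Submodule.map (Algebra.linearMap ↥R S)
          (IsLocalRing.maximalIdeal ↥R : Submodule ↥R ↥R) ⊔
        Submodule.restrictScalars ↥R
          (Ideal.map (algebraMap ↥R S) ((IsLocalRing.maximalIdeal ↥R) ^ i)))
    (Ri : ℕ → Subring S)
    (hRi : ∀ i, (Ri i : Set S) =
      {s : S | ∃ r ∈ R, ∃ m ∈ (Ideal.map (algebraMap ↥R S)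
        ((IsLocalRing.maximalIdeal ↥R) ^ i) : Set S), s = r + m})
    (hlen : ∀ i, 1 ≤ i → i ≤ n - 1 → Mi (i + 1) ⋖ Mi i) :
    Ri n = R ∧
      ∀ i, 1 ≤ i → i ≤ n - 1 →
        Ri (i + 1) < Ri i ∧
          (∀ T : Subring S, Ri (i + 1) ≤ T → T ≤ Ri i → T = Ri (i + 1) ∨ T = Ri i) ∧
          {t : S | t ∈ Ri i ∧ ∀ u ∈ Ri i, t * u ∈ Ri (i + 1)} = (Mi (i + 1) : Set S) ∧
          ∀ a ∈ Mi i, ∀ b ∈ Mi i, a * b ∈ Mi (i + 1) := by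
  set M := IsLocalRing.maximalIdeal ↥R with hMdef
  set J : ℕ → Ideal S := fun i => Ideal.map (algebraMap ↥R S) (M ^ i) with hJdef
  have hf : ∀ r : ↥R, algebraMap ↥R S r = (r : S) := fun r => rfl
  -- basic facts on J
  have Jmono : ∀ {i j : ℕ}, i ≤ j → J j ≤ J i := by
    intro i j h
    exact Ideal.map_mono (Ideal.pow_le_pow_right h)
  have Jmul : ∀ i j : ℕ, ∀ a ∈ J i, ∀ b ∈ J j, a * b ∈ J (i + j) := by
    intro i j a ha b hb
    have : a * b ∈ J i * J j := Ideal.mul_mem_mul ha hb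
    simpa [hJdef, ← Ideal.map_mul, ← pow_add] using this
  have memJ : ∀ i : ℕ, ∀ m : ↥R, m ∈ M ^ i → (m : S) ∈ J i := by
    intro i m hm
    exact Ideal.mem_map_of_mem _ hm
  have mulMJ : ∀ i : ℕ, ∀ m : ↥R, m ∈ M → ∀ b ∈ J i, (m : S) * b ∈ J (i + 1) := by
    intro i m hm b hb
    have h1 : (m : S) ∈ J 1 := memJ 1 m (by simpa using hm)
    simpa [add_comm] using Jmul 1 i _ h1 b hb
  -- J 1 ≠ ⊤ via Nakayama
  have hJ1 : J 1 ≠ ⊤ := by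
    intro h
    have htop : (⊤ : Submodule ↥R S) ≤ M • (⊤ : Submodule ↥R S) := by
      rw [Ideal.smul_top_eq_map]
      intro x _
      rw [Submodule.restrictScalars_mem]
      have : x ∈ (⊤ : Ideal S) := trivial
      rw [← h] at this
      simpa [hJdef, pow_one] using this
    have hb : (⊤ : Submodule ↥R S) = ⊥ :=
      Submodule.eq_bot_of_le_smul_of_le_jacobson_bot M ⊤
        (Module.Finite.fg_top (R := ↥R) (M := S)) htop
        (IsLocalRing.maximalIdeal_le_jacobson ⊥)
    have h1mem : (1 : S) ∈ (⊥ : Submodule ↥R S) := by rw [← hb]; trivial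
    have h10 : (1 : S) = 0 := by simpa using h1mem
    have : ((1 : ↥R) : S) = ((0 : ↥R) : S) := by simpa using h10
    exact one_ne_zero (Subtype.coe_injective this)
  -- coefficients of elements of J i (i ≥ 1) lying in R are in M
  have Jne : ∀ i : ℕ, 1 ≤ i → ∀ r : ↥R, (r : S) ∈ J i → r ∈ M := by
    intro i hi r hr
    by_contra hrm
    have hu : IsUnit r := by
      rw [hMdef] at hrm
      exact not_not.mp (fun h => hrm ((IsLocalRing.mem_maximalIdeal r).mpr h))
    obtain ⟨u, hu⟩ := hu
    have h1 : ((1 : ↥R) : S) ∈ J i := by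
      have hmem : (((u⁻¹ : (↥R)ˣ) : ↥R) : S) * (r : S) ∈ J i := Ideal.mul_mem_left _ _ hr
      have heq : (((u⁻¹ : (↥R)ˣ) : ↥R) : S) * (r : S) = ((1 : ↥R) : S) := by
        rw [← Subring.coe_mul]
        congr 1
        rw [← hu]
        exact u.inv_mul
      rwa [heq] at hmem
    have : J 1 = ⊤ := by
      rw [Ideal.eq_top_iff_one]
      have : ((1 : ↥R) : S) ∈ J 1 := Jmono hi h1
      simpa using this
    exact hJ1 this
  -- membership characterizations
  have memMi : ∀ i : ℕ, ∀ x : S,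
      x ∈ Mi i ↔ ∃ m : ↥R, m ∈ M ∧ ∃ y ∈ J i, x = (m : S) + y := by
    intro i x
    rw [hMi i]
    rw [Submodule.mem_sup]
    constructor
    · rintro ⟨y, hy, z, hz, rfl⟩
      rw [Submodule.mem_map] at hy
      obtain ⟨m, hm, rfl⟩ := hy
      rw [Submodule.restrictScalars_mem] at hz
      exact ⟨m, hm, z, hz, rfl⟩
    · rintro ⟨m, hm, y, hy, rfl⟩
      refine ⟨(m : S), Submodule.mem_map.mpr ⟨m, hm, rfl⟩, y,
        (Submodule.restrictScalars_mem _ _ _).mpr hy, rfl⟩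
  have memRi : ∀ i : ℕ, ∀ x : S,
      x ∈ Ri i ↔ ∃ r : ↥R, ∃ y ∈ J i, x = (r : S) + y := by
    intro i x
    have : x ∈ Ri i ↔ x ∈ (Ri i : Set S) := Iff.rfl
    rw [this, hRi i]
    constructor
    · rintro ⟨r, hr, m, hm, rfl⟩
      exact ⟨⟨r, hr⟩, m, hm, rfl⟩
    · rintro ⟨r, y, hy, rfl⟩
      exact ⟨(r : S), r.2, y, hy, rfl⟩
  -- first part: Ri n = R
  have hRn : Ri n = R := by
    ext x
    rw [memRi n x]
    constructor
    · rintro ⟨r, y, hy, rfl⟩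
      have : J n = ⊥ := by
        simp [hJdef, hn0, Ideal.map_bot]
      rw [this] at hy
      rw [Submodule.mem_bot] at hy
      subst hy
      simpa using r.2
    · intro hx
      exact ⟨⟨x, hx⟩, 0, Submodule.zero_mem _, by simp⟩
  refine ⟨hRn, ?_⟩
  intro i hi1 hi2
  -- monotonicity Ri (i+1) ≤ Ri i
  have hRle : Ri (i + 1) ≤ Ri i := by
    intro x hx
    rw [memRi] at hx
    rw [memRi]
    obtain ⟨r, y, hy, rfl⟩ := hx
    exact ⟨r, y, Jmono (Nat.le_succ i) hy, rfl⟩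
  -- strictness
  have hcov := hlen i hi1 hi2
  have hlt : Ri (i + 1) < Ri i := by
    refine lt_of_le_of_ne hRle ?_
    intro heq
    obtain ⟨x, hxi, hxi1⟩ := SetLike.exists_of_lt hcov.lt
    apply hxi1
    rw [memMi] at hxi
    obtain ⟨m, hm, y, hy, rfl⟩ := hxi
    have hxR : (m : S) + y ∈ Ri (i + 1) := by
      rw [heq, memRi]
      exact ⟨m, y, hy, rfl⟩
    rw [memRi] at hxR
    obtain ⟨r, z, hz, hxe⟩ := hxR
    have hrm : (↑(r - m) : S) ∈ J i := by
      push_cast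
      have : (r : S) - (m : S) = y - z := by linear_combination -hxe
      rw [this]
      exact Submodule.sub_mem _ hy (Jmono (Nat.le_succ i) hz)
    have hrM : r - m ∈ M := Jne i hi1 _ hrm
    have hrM' : r ∈ M := by
      have := Submodule.add_mem M hrM hm
      simpa using this
    rw [memMi]
    refine ⟨r, hrM', z, hz, hxe⟩
  refine ⟨hlt, ?_, ?_, ?_⟩
  -- minimality
  · intro T hT1 hT2
    have hRT : ∀ r : ↥R, (r : S) ∈ T := by
      intro r
      apply hT1
      rw [memRi]
      exact ⟨r, 0, Submodule.zero_mem _, by simp⟩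
    let N : Submodule ↥R S :=
      { carrier := {x | x ∈ Mi i ∧ x ∈ T}
        add_mem' := fun ha hb => ⟨Submodule.add_mem _ ha.1 hb.1, add_mem ha.2 hb.2⟩
        zero_mem' := ⟨Submodule.zero_mem _, zero_mem T⟩
        smul_mem' := fun c x hx => by
          refine ⟨Submodule.smul_mem _ c hx.1, ?_⟩
          rw [Algebra.smul_def, hf]
          exact mul_mem (hRT c) hx.2 }
    have hN1 : Mi (i + 1) ≤ N := by
      intro x hx
      refine ⟨hcov.le hx, ?_⟩
      apply hT1
      rw [memMi] at hx
      obtain ⟨m, hm, y, hy, rfl⟩ := hx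
      rw [memRi]
      exact ⟨m, y, hy, rfl⟩
    have hN2 : N ≤ Mi i := fun x hx => hx.1
    rcases hcov.eq_or_eq hN1 hN2 with hN | hN
    · -- N = Mi (i+1) : T = Ri (i+1)
      left
      refine le_antisymm ?_ hT1
      intro t ht
      have htRi : t ∈ Ri i := hT2 ht
      rw [memRi] at htRi
      obtain ⟨r, x, hx, rfl⟩ := htRi
      have hxT : x ∈ T := by
        have : ((r : S) + x) - (r : S) ∈ T := sub_mem ht (hRT r)
        simpa using this
      have hxN : x ∈ N := by
        refine ⟨?_, hxT⟩
        rw [memMi]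
        exact ⟨0, Submodule.zero_mem _, x, hx, by simp⟩
      rw [hN] at hxN
      rw [memMi] at hxN
      obtain ⟨m, hm, y, hy, hxe⟩ := hxN
      rw [memRi]
      refine ⟨r + m, y, hy, by push_cast; rw [hxe]; ring⟩
    · -- N = Mi i : T = Ri i
      right
      refine le_antisymm hT2 ?_
      intro t ht
      rw [memRi] at ht
      obtain ⟨r, x, hx, rfl⟩ := ht
      have hxN : x ∈ N := by
        rw [hN, memMi]
        exact ⟨0, Submodule.zero_mem _, x, hx, by simp⟩
      exact add_mem (hRT r) hxN.2
  -- conductor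
  · ext x
    simp only [Set.mem_setOf_eq, SetLike.mem_coe]
    constructor
    · rintro ⟨hxRi, hcondx⟩
      rw [memRi] at hxRi
      obtain ⟨r, y, hy, rfl⟩ := hxRi
      have hx1 : (r : S) + y ∈ Ri (i + 1) := by
        have h' := hcondx 1 (by rw [memRi]; exact ⟨1, 0, Submodule.zero_mem _, by simp⟩)
        simpa using h'
      rw [memRi] at hx1
      obtain ⟨r', z, hz, hxe⟩ := hx1
      by_cases hrm : r' ∈ M
      · rw [memMi]
        exact ⟨r', hrm, z, hz, hxe⟩
      · exfalso
        have hu : IsUnit r' := by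
          rw [hMdef] at hrm
          exact not_not.mp (fun h => hrm ((IsLocalRing.mem_maximalIdeal r').mpr h))
        obtain ⟨u, hu⟩ := hu
        apply hlt.not_ge
        intro w hw
        rw [memRi] at hw
        obtain ⟨rw', v, hv, rfl⟩ := hw
        -- show (rw' : S) + v ∈ Ri (i+1); suffices v ∈ Ri (i+1)
        have hvmem : v ∈ Ri (i + 1) := by
          have hprod : ((r : S) + y) * v ∈ Ri (i + 1) := by
            apply hcondx v
            rw [memRi]
            exact ⟨0, v, hv, by simp⟩
          rw [hxe] at hprod
          have hzv : z * v ∈ Ri (i + 1) := by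
            rw [memRi]
            exact ⟨0, z * v, Ideal.mul_mem_right _ _ hz, by simp⟩
          have hrv : (r' : S) * v ∈ Ri (i + 1) := by
            have h' : ((r' : S) + z) * v - z * v ∈ Ri (i + 1) := sub_mem hprod hzv
            convert h' using 1
            ring
          rw [memRi] at hrv
          obtain ⟨a, b, hb, hrve⟩ := hrv
          rw [memRi]
          refine ⟨((u⁻¹ : (↥R)ˣ) : ↥R) * a, (((u⁻¹ : (↥R)ˣ) : ↥R) : S) * b,
            Ideal.mul_mem_left _ _ hb, ?_⟩
          have hveq : v = (((u⁻¹ : (↥R)ˣ) : ↥R) : S) * ((r' : S) * v) := by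
            rw [← mul_assoc, ← Subring.coe_mul]
            have h1 : ((u⁻¹ : (↥R)ˣ) : ↥R) * r' = 1 := by rw [← hu]; exact u.inv_mul
            rw [h1]
            simp
          rw [hveq, hrve]
          push_cast
          ring
        rw [memRi] at hvmem ⊢
        obtain ⟨a, b, hb, hve⟩ := hvmem
        exact ⟨rw' + a, b, hb, by push_cast; rw [hve]; ring⟩
    · intro hx
      rw [memMi] at hx
      obtain ⟨m, hm, y, hy, rfl⟩ := hx
      constructor
      · rw [memRi]
        exact ⟨m, y, Jmono (Nat.le_succ i) hy, rfl⟩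
      · intro u hu
        rw [memRi] at hu
        obtain ⟨r, z, hz, rfl⟩ := hu
        rw [memRi]
        refine ⟨m * r, (m : S) * z + y * (r : S) + y * z, ?_, by push_cast; ring⟩
        refine Submodule.add_mem _ (Submodule.add_mem _ ?_ ?_) ?_
        · exact mulMJ i m hm z hz
        · exact Ideal.mul_mem_right _ _ hy
        · exact Ideal.mul_mem_right _ _ hy
  -- products
  · intro a ha b hb
    rw [memMi] at ha hb
    rw [memMi]
    obtain ⟨m, hm, y, hy, rfl⟩ := ha
    obtain ⟨m', hm', y', hy', rfl⟩ := hb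
    refine ⟨m * m', Ideal.mul_mem_right _ _ hm,
      (m : S) * y' + y * (m' : S) + y * y', ?_, by push_cast; ring⟩
    refine Submodule.add_mem _ (Submodule.add_mem _ ?_ ?_) ?_
    · exact mulMJ i m hm y' hy'
    · rw [mul_comm]; exact mulMJ i m' hm' y hy
    · refine Jmono ?_ (Jmul i i y hy y' hy')
      omega
end

section
/- Let R ⊆ S be a ring extension that is a chain (the set of intermediate rings is totally ordered) and let N be a maximal ideal of S. Then R/(N ∩ R) is a valuation domain with quotient field S/N, provided R/(N∩R) ⊆ S/N is integrally closed; in general, the integral closure of R/(N∩R) in S/N is a valuation ring of the field S/N. -/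
open Polynomial in
theorem aux_int {A K : Type*} [CommRing A] [Field K] [Algebra A K] (x : K)
    (hx : x⁻¹ ∈ Algebra.adjoin A {x}) : IsIntegral A x⁻¹ := by
  rcases eq_or_ne x 0 with rfl | hx0
  · rw [inv_zero]; exact isIntegral_zero
  rw [Algebra.adjoin_singleton_eq_range_aeval] at hx
  obtain ⟨q, hq⟩ := hx
  replace hq : Polynomial.aeval x q = x⁻¹ := hq
  set n := q.natDegree with hn
  set p : Polynomial A :=
    X ^ (n + 1) - ∑ i ∈ Finset.range (n + 1), C (q.coeff i) * X ^ (n - i) with hp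
  have hdeg : (∑ i ∈ Finset.range (n + 1), C (q.coeff i) * X ^ (n - i)).degree < ((n + 1 : ℕ) : WithBot ℕ) := by
    refine lt_of_le_of_lt (Polynomial.degree_sum_le _ _) ?_
    refine (Finset.sup_lt_iff (by exact_mod_cast WithBot.bot_lt_coe (n+1))).2 ?_
    intro i hi
    refine lt_of_le_of_lt (degree_C_mul_X_pow_le _ _) ?_
    exact_mod_cast Nat.lt_succ_of_le (Nat.sub_le n i)
  have hmonic : p.Monic := Polynomial.monic_X_pow_sub hdeg
  refine ⟨p, hmonic, ?_⟩
  rw [← Polynomial.aeval_def, hp, map_sub, map_pow, Polynomial.aeval_X, map_sum]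
  have h1 : x⁻¹ = ∑ i ∈ Finset.range (n + 1), algebraMap A K (q.coeff i) * x ^ i := by
    rw [← hq, Polynomial.aeval_eq_sum_range]
    exact Finset.sum_congr rfl fun i _ => by rw [Algebra.smul_def]
  have h2 : x⁻¹ ^ (n + 1) = ∑ i ∈ Finset.range (n + 1),
      algebraMap A K (q.coeff i) * x⁻¹ ^ (n - i) := by
    calc x⁻¹ ^ (n + 1) = x⁻¹ ^ n * x⁻¹ := pow_succ _ _
      _ = x⁻¹ ^ n * ∑ i ∈ Finset.range (n + 1), algebraMap A K (q.coeff i) * x ^ i := by rw [← h1]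
      _ = ∑ i ∈ Finset.range (n + 1), algebraMap A K (q.coeff i) * (x⁻¹ ^ n * x ^ i) := by
          rw [Finset.mul_sum]; exact Finset.sum_congr rfl fun i _ => by ring
      _ = _ := by
          refine Finset.sum_congr rfl fun i hi => ?_
          congr 1
          rw [pow_sub₀ x⁻¹ (inv_ne_zero hx0) (Nat.lt_succ_iff.1 (Finset.mem_range.1 hi)),
            inv_pow x i, inv_inv]
  rw [h2, sub_eq_zero]
  exact Finset.sum_congr rfl fun i _ => by
    rw [Polynomial.aeval_mul, Polynomial.aeval_C, map_pow, Polynomial.aeval_X]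

theorem aux_map {S K : Type*} [CommRing S] [CommRing K] (R : Subring S) (f : S →+* K)
    (s t : S) (ht : t ∈ Algebra.adjoin (↥R) ({s} : Set S)) :
    f t ∈ Algebra.adjoin ↥(R.map f) ({f s} : Set K) := by
  rw [Algebra.adjoin_singleton_eq_range_aeval] at ht ⊢
  obtain ⟨q, hq⟩ := ht
  replace hq : Polynomial.aeval s q = t := hq
  set R' := R.map f
  set ψ : ↥R →+* ↥R' :=
    RingHom.codRestrict (f.comp R.subtype) R'
      (fun x => Subring.mem_map.2 ⟨x, x.2, rfl⟩) with hψ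
  refine ⟨q.map ψ, ?_⟩
  show Polynomial.aeval (f s) (q.map ψ) = _
  rw [Polynomial.aeval_def, Polynomial.eval₂_map, ← hq, Polynomial.aeval_def,
    Polynomial.hom_eval₂]
  rfl


theorem aux_main {S K : Type*} [CommRing S] [Field K] (R : Subring S) (f : S →+* K)
    (hf : Function.Surjective f)
    (hchain : ∀ T₁ T₂ : Subring S, R ≤ T₁ → R ≤ T₂ → T₁ ≤ T₂ ∨ T₂ ≤ T₁) :
    ((∀ y : K, IsIntegral (R.map f) y → y ∈ R.map f) →
      ValuationRing (R.map f) ∧ IsFractionRing (R.map f) K) ∧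
      ValuationRing (integralClosure (R.map f) K) := by
  set R' := R.map f with hR'
  have hRle : ∀ s : S, R ≤ (Algebra.adjoin (↥R) ({s} : Set S)).toSubring := by
    intro s r hr
    exact Subalgebra.algebraMap_mem (Algebra.adjoin (↥R) ({s} : Set S)) (⟨r, hr⟩ : ↥R)
  have key : ∀ x : K, IsIntegral ↥R' x ∨ IsIntegral ↥R' x⁻¹ := by
    intro x
    obtain ⟨s, hs⟩ := hf x
    obtain ⟨t, ht⟩ := hf x⁻¹
    rcases hchain (Algebra.adjoin (↥R) ({s} : Set S)).toSubring
        (Algebra.adjoin (↥R) ({t} : Set S)).toSubring (hRle s) (hRle t) with h | h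
    · left
      have hmem : s ∈ Algebra.adjoin (↥R) ({t} : Set S) :=
        h (Algebra.self_mem_adjoin_singleton (↥R) s)
      have := aux_map R f t s hmem
      rw [hs, ht] at this
      have h2 : (x⁻¹)⁻¹ ∈ Algebra.adjoin ↥R' ({x⁻¹} : Set K) := by
        rw [inv_inv]; exact this
      have h3 := aux_int (x⁻¹) h2
      rwa [inv_inv] at h3
    · right
      have hmem : t ∈ Algebra.adjoin (↥R) ({s} : Set S) :=
        h (Algebra.self_mem_adjoin_singleton (↥R) t)
      have := aux_map R f s t hmem
      rw [hs, ht] at this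
      exact aux_int x this
  constructor
  · intro hcl
    have hV : ∀ x : K, x ∈ R' ∨ x⁻¹ ∈ R' := fun x => (key x).imp (hcl x) (hcl x⁻¹)
    let V : ValuationSubring K := ⟨R', hV⟩
    exact ⟨inferInstanceAs (ValuationRing V), inferInstanceAs (IsFractionRing V K)⟩
  · set C := integralClosure ↥R' K with hC
    have hmem : ∀ x : K, x ∈ C ∨ x⁻¹ ∈ C := fun x =>
      (key x).imp (fun h => h) (fun h => h)
    refine { cond' := fun a b => ?_ }
    rcases eq_or_ne (a : K) 0 with ha | ha
    · exact ⟨0, Or.inr (Subtype.ext (by push_cast; simp [ha]))⟩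
    rcases eq_or_ne (b : K) 0 with hb | hb
    · exact ⟨0, Or.inl (Subtype.ext (by push_cast; simp [hb]))⟩
    rcases hmem ((b : K) / (a : K)) with h | h
    · refine ⟨⟨_, h⟩, Or.inl (Subtype.ext ?_)⟩
      push_cast
      field_simp
    · rw [inv_div] at h
      refine ⟨⟨_, h⟩, Or.inr (Subtype.ext ?_)⟩
      push_cast
      field_simp

/-- Let `R ⊆ S` be a chained ring extension and `N` a maximal ideal of `S`. If the
image `R'` of `R` in the field `S/N` is integrally closed there, then `R'` is a
valuation domain with quotient field `S/N`; in general, the integral closure of `R'`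
in `S/N` is a valuation ring of the field `S/N`. -/
theorem stmt16 (S : Type*) [CommRing S] (R : Subring S)
    (hchain : ∀ T₁ T₂ : Subring S, R ≤ T₁ → R ≤ T₂ → T₁ ≤ T₂ ∨ T₂ ≤ T₁)
    (N : Ideal S) (hN : N.IsMaximal) :
    letI : Field (S ⧸ N) := @Ideal.Quotient.field S _ N hN
    ((∀ y : S ⧸ N,
        IsIntegral (R.map (Ideal.Quotient.mk N)) y → y ∈ R.map (Ideal.Quotient.mk N)) →
      ValuationRing (R.map (Ideal.Quotient.mk N)) ∧
        IsFractionRing (R.map (Ideal.Quotient.mk N)) (S ⧸ N)) ∧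
      ValuationRing (integralClosure (R.map (Ideal.Quotient.mk N)) (S ⧸ N)) := by
  letI : Field (S ⧸ N) := @Ideal.Quotient.field S _ N hN
  exact aux_main R (Ideal.Quotient.mk N) Ideal.Quotient.mk_surjective hchain
end

section
/- Let K be a finite field and T := K[Y]/(Y⁴). Let y denote the image of Y in T, S₁ := K[y²] and S₂ := K[y³]. Then S₁ and S₂ are incomparable intermediate rings of K ⊆ T (neither contains the other); in particular the lattice [K,T] is not a chain. -/
/-- Let `K` be a finite field, `T := K[Y]/(Y⁴)` and `y` the image of `Y` in `T`.
Then the subalgebras `S₁ := K[y²]` and `S₂ := K[y³]` are incomparable; in particular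
`[K, T]` is not a chain. -/
theorem stmt18 (K : Type*) [Field K] [Finite K] :
    let T := Polynomial K ⧸ Ideal.span {(Polynomial.X : Polynomial K) ^ 4}
    let y : T := Ideal.Quotient.mk _ Polynomial.X
    ¬ (Algebra.adjoin K {y ^ 2} ≤ Algebra.adjoin K {y ^ 3}) ∧
      ¬ (Algebra.adjoin K {y ^ 3} ≤ Algebra.adjoin K {y ^ 2}) := by
  intro T y
  classical
  have hf : (Polynomial.X ^ 4 : Polynomial K) ≠ 0 := pow_ne_zero _ Polynomial.X_ne_zero
  set pb : PowerBasis K T := AdjoinRoot.powerBasis hf with hpb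
  have hdim : pb.dim = 4 := by
    simp [hpb, AdjoinRoot.powerBasis_dim]
  have hgen : pb.gen = y := rfl
  have hy4 : y ^ 4 = 0 := by
    have : (Ideal.Quotient.mk (Ideal.span {(Polynomial.X : Polynomial K) ^ 4}))
        (Polynomial.X ^ 4) = 0 :=
      Ideal.Quotient.eq_zero_iff_mem.mpr (Ideal.subset_span rfl)
    rwa [map_pow] at this
  have hzero : ∀ m : ℕ, 4 ≤ m → y ^ m = 0 := by
    intro m hm
    have : y ^ m = y ^ 4 * y ^ (m - 4) := by rw [← pow_add]; congr 1; omega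
    rw [this, hy4, zero_mul]
  have hbasis : ∀ k (hk : k < pb.dim), pb.basis ⟨k, hk⟩ = y ^ k := by
    intro k hk
    rw [pb.basis_eq_pow, hgen]
  -- coordinate functionals
  have key : ∀ (j : ℕ) (hj : j < pb.dim) (k : ℕ) (hk : k < 4),
      pb.basis.coord ⟨j, hj⟩ (y ^ k) = if k = j then 1 else 0 := by
    intro j hj k hk
    have hk' : k < pb.dim := by omega
    rw [← hbasis k hk', Module.Basis.coord_apply, pb.basis.repr_self_apply]
    simp [Fin.ext_iff]
  constructor
  · intro h
    have hmem : y ^ 2 ∈ Algebra.adjoin K {y ^ 3} :=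
      h (Algebra.subset_adjoin rfl)
    rw [Algebra.adjoin_singleton_eq_range_aeval] at hmem
    obtain ⟨p, hp⟩ := hmem
    have h2 : (2 : ℕ) < pb.dim := by omega
    have hp' : Polynomial.aeval (y ^ 3) p = y ^ 2 := hp
    rw [Polynomial.aeval_eq_sum_range] at hp'
    have := congrArg (pb.basis.coord ⟨2, h2⟩) hp'
    rw [map_sum, key 2 h2 2 (by norm_num)] at this
    have hterm : ∀ i ∈ Finset.range (p.natDegree + 1),
        pb.basis.coord ⟨2, h2⟩ (p.coeff i • (y ^ 3) ^ i) = 0 := by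
      intro i _
      rw [map_smul, ← pow_mul]
      rcases Nat.lt_or_ge i 2 with hi | hi
      · rw [key 2 h2 (3 * i) (by omega)]
        have hne : 3 * i ≠ 2 := by omega
        simp [hne]
      · rw [hzero (3 * i) (by omega)]
        simp
    rw [Finset.sum_eq_zero hterm] at this
    simp at this
  · intro h
    have hmem : y ^ 3 ∈ Algebra.adjoin K {y ^ 2} :=
      h (Algebra.subset_adjoin rfl)
    rw [Algebra.adjoin_singleton_eq_range_aeval] at hmem
    obtain ⟨p, hp⟩ := hmem
    have h3 : (3 : ℕ) < pb.dim := by omega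
    have hp' : Polynomial.aeval (y ^ 2) p = y ^ 3 := hp
    rw [Polynomial.aeval_eq_sum_range] at hp'
    have := congrArg (pb.basis.coord ⟨3, h3⟩) hp'
    rw [map_sum, key 3 h3 3 (by norm_num)] at this
    have hterm : ∀ i ∈ Finset.range (p.natDegree + 1),
        pb.basis.coord ⟨3, h3⟩ (p.coeff i • (y ^ 2) ^ i) = 0 := by
      intro i _
      rw [map_smul, ← pow_mul]
      rcases Nat.lt_or_ge i 2 with hi | hi
      · rw [key 3 h3 (2 * i) (by omega)]
        have hne : 2 * i ≠ 3 := by omega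
        simp [hne]
      · rw [hzero (2 * i) (by omega)]
        simp
    rw [Finset.sum_eq_zero hterm] at this
    simp at this
end
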